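/- arXiv:1704.05373 — 13 statements merged into one kernel-verified Lean document; each statement's English description precedes it below -/
import Mathlib

section
/- Let a, b, c be positive real numbers satisfying the strict triangle inequalities a < b + c, b < a + c, c < a + b (the side lengths of a Euclidean triangle). Then 2abc/((a+b-c)(a+c-b)(b+c-a)) ≥ (abc + a³ + b³ + c³)/(2abc) ≥ a/b + b/c + c/a − 1 ≥ (2/3)(a/b + b/c + c/a) ≥ 2. -/
theorem schur3 (u v w : ℝ) (hu : 0 ≤ u) (hv : 0 ≤ v) (hw : 0 ≤ w) :
    u^2*v + u^2*w + v^2*u + v^2*w + w^2*u + w^2*v ≤ u^3 + v^3 + w^3 + 3*(u*v*w) := by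
  rcases le_total u v with h1 | h1 <;> rcases le_total v w with h2 | h2 <;>
    rcases le_total u w with h3 | h3 <;>
    nlinarith [mul_nonneg (mul_nonneg hu hv) hw, sq_nonneg (u-v), sq_nonneg (v-w), sq_nonneg (u-w),
      mul_nonneg hu (sq_nonneg (u-v)), mul_nonneg hv (sq_nonneg (v-w)), mul_nonneg hw (sq_nonneg (u-w)),
      mul_nonneg hu (sq_nonneg (v-w)), mul_nonneg hv (sq_nonneg (u-w)), mul_nonneg hw (sq_nonneg (u-v))]

theorem euler_aux (x y z : ℝ) (hx : 0 < x) (hy : 0 < y) (hz : 0 < z) :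
    ((y+z)*(x+z)*(x+y) + (y+z)^3 + (x+z)^3 + (x+y)^3) * (8*(x*y*z)) ≤ 4*((y+z)*(x+z)*(x+y))^2 := by
  have hs := schur3 (x*y) (y*z) (x*z) (by positivity) (by positivity) (by positivity)
  nlinarith [hs, sq_nonneg (x^2*(y-z)), sq_nonneg (y^2*(x-z)), sq_nonneg (z^2*(x-y))]

theorem stmt_0 (a b c : ℝ) (ha : 0 < a) (hb : 0 < b) (hc : 0 < c)
    (hab : a < b + c) (hbc : b < a + c) (hca : c < a + b) :
    2 * a * b * c / ((a + b - c) * (a + c - b) * (b + c - a)) ≥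
      (a * b * c + a ^ 3 + b ^ 3 + c ^ 3) / (2 * a * b * c) ∧
    (a * b * c + a ^ 3 + b ^ 3 + c ^ 3) / (2 * a * b * c) ≥
      a / b + b / c + c / a - 1 ∧
    a / b + b / c + c / a - 1 ≥ 2 / 3 * (a / b + b / c + c / a) ∧
    2 / 3 * (a / b + b / c + c / a) ≥ 2 := by
  have hx : 0 < a + b - c := by linarith
  have hy : 0 < a + c - b := by linarith
  have hz : 0 < b + c - a := by linarith
  have habc : 0 < 2 * a * b * c := by positivity
  have hxyz : 0 < (a + b - c) * (a + c - b) * (b + c - a) := by positivity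
  have hS : a / b + b / c + c / a ≥ 3 := by
    rw [ge_iff_le, ← sub_nonneg]
    have h1 : a / b + b / c + c / a - 3 = (a^2*c + a*b^2 + b*c^2 - 3*(a*b*c)) / (a*b*c) := by
      field_simp
    rw [h1]
    apply div_nonneg _ (by positivity)
    nlinarith [mul_nonneg hc.le (sq_nonneg (a-b)), mul_nonneg ha.le (sq_nonneg (b-c)),
      mul_nonneg hb.le (sq_nonneg (c-a)), sq_nonneg (a*c - b*c), sq_nonneg (a*b - a*c),
      sq_nonneg (a*b - b*c), mul_pos ha hb, mul_pos hb hc, mul_pos ha hc]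
  refine ⟨?_, ?_, by linarith, by linarith⟩
  · rw [ge_iff_le, div_le_div_iff₀ habc hxyz]
    have key := euler_aux ((a+b-c)/2) ((a+c-b)/2) ((b+c-a)/2)
      (by linarith) (by linarith) (by linarith)
    have e1 : (a+c-b)/2 + (b+c-a)/2 = c := by ring
    have e2 : (a+b-c)/2 + (b+c-a)/2 = b := by ring
    have e3 : (a+b-c)/2 + (a+c-b)/2 = a := by ring
    rw [e1, e2, e3] at key
    nlinarith [key]
  · rw [ge_iff_le, ← sub_nonneg]
    have key : 0 ≤ a^3 + b^3 + c^3 + 3*(a*b*c) - 2*(a^2*c + a*b^2 + b*c^2) := by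
      nlinarith [mul_pos hx hy, mul_pos hy hz, mul_pos hx hz,
        mul_nonneg hx.le (sq_nonneg (a-b)), mul_nonneg hy.le (sq_nonneg (a-c)),
        mul_nonneg hz.le (sq_nonneg (b-c)), sq_nonneg (a-b), sq_nonneg (b-c), sq_nonneg (a-c)]
    have h : (a * b * c + a ^ 3 + b ^ 3 + c ^ 3) / (2 * a * b * c) - (a / b + b / c + c / a - 1)
        = (a^3 + b^3 + c^3 + 3*(a*b*c) - 2*(a^2*c + a*b^2 + b*c^2)) / (2*(a*b*c)) := by
      field_simp; ring
    rw [h]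
    exact div_nonneg key (by positivity)
end

section
/- Let f : ℝ → ℝ → ℝ → ℝ be a function such that f(x, y, z) ≥ 0 for all positive reals x, y, z satisfying the strict triangle inequalities x < y + z, y < x + z, z < x + y. Then for all positive reals a, b, c satisfying the strict triangle inequalities a < b + c, b < a + c, c < a + b together with a + b + c < 2π, one has f(sin(a/2), sin(b/2), sin(c/2)) ≥ 0. -/
lemma sin_half_triangle (a b c : ℝ) (ha : 0 < a) (hb : 0 < b) (hc : 0 < c)
    (hab : a < b + c) (hbc : b < a + c) (hca : c < a + b)
    (hsum : a + b + c < 2 * Real.pi) :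
    Real.sin (a / 2) < Real.sin (b / 2) + Real.sin (c / 2) := by
  have hpi : (0:ℝ) < Real.pi := Real.pi_pos
  have h1 : Real.sin (b / 2) + Real.sin (c / 2)
      = 2 * Real.sin ((b + c) / 4) * Real.cos ((b - c) / 4) := by
    have hb2 : b / 2 = (b + c) / 4 + (b - c) / 4 := by ring
    have hc2 : c / 2 = (b + c) / 4 - (b - c) / 4 := by ring
    rw [hb2, hc2, Real.sin_add, Real.sin_sub]; ring
  have h2 : Real.sin (a / 2) = 2 * Real.sin (a / 4) * Real.cos (a / 4) := by
    have : a / 2 = 2 * (a / 4) := by ring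
    rw [this, Real.sin_two_mul]
  rw [h1, h2]
  have ha4 : 0 < a / 4 := by linarith
  have hbc4 : a / 4 < (b + c) / 4 := by linarith
  have hsinlt : Real.sin (a / 4) < Real.sin ((b + c) / 4) :=
    Real.sin_lt_sin_of_lt_of_le_pi_div_two (by linarith) (by linarith) hbc4
  have hsinpos : 0 < Real.sin (a / 4) := Real.sin_pos_of_pos_of_lt_pi ha4 (by linarith)
  have habslt : |b - c| < a := abs_lt.mpr ⟨by linarith, by linarith⟩
  have habsnn : 0 ≤ |b - c| := abs_nonneg _
  have hcosabs : Real.cos ((b - c) / 4) = Real.cos (|b - c| / 4) := by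
    rcases le_or_gt 0 (b - c) with h | h
    · rw [abs_of_nonneg h]
    · rw [abs_of_neg h, show -(b - c) / 4 = -((b - c) / 4) by ring, Real.cos_neg]
  have hcoslt : Real.cos (a / 4) ≤ Real.cos ((b - c) / 4) := by
    rw [hcosabs]
    exact le_of_lt (Real.cos_lt_cos_of_nonneg_of_le_pi (by positivity) (by linarith)
      (by linarith))
  have hcospos : 0 < Real.cos (a / 4) := Real.cos_pos_of_mem_Ioo ⟨by linarith, by linarith⟩
  nlinarith [mul_lt_mul hsinlt hcoslt hcospos (le_of_lt (lt_trans hsinpos hsinlt))]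

theorem stmt_2 (f : ℝ → ℝ → ℝ → ℝ)
    (hf : ∀ x y z : ℝ, 0 < x → 0 < y → 0 < z →
      x < y + z → y < x + z → z < x + y → f x y z ≥ 0)
    (a b c : ℝ) (ha : 0 < a) (hb : 0 < b) (hc : 0 < c)
    (hab : a < b + c) (hbc : b < a + c) (hca : c < a + b)
    (hsum : a + b + c < 2 * Real.pi) :
    f (Real.sin (a / 2)) (Real.sin (b / 2)) (Real.sin (c / 2)) ≥ 0 := by
  have hpi : (0:ℝ) < Real.pi := Real.pi_pos
  apply hf
  · exact Real.sin_pos_of_pos_of_lt_pi (by linarith) (by linarith)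
  · exact Real.sin_pos_of_pos_of_lt_pi (by linarith) (by linarith)
  · exact Real.sin_pos_of_pos_of_lt_pi (by linarith) (by linarith)
  · exact sin_half_triangle a b c ha hb hc hab hbc hca hsum
  · exact sin_half_triangle b a c hb ha hc hbc hab (by linarith) (by linarith)
  · exact sin_half_triangle c a b hc ha hb hca (by linarith) (by linarith) (by linarith)
end

section
/- Let a, b, c be positive real numbers satisfying the strict triangle inequalities a < b + c, b < a + c, c < a + b. Then sinh((a+b-c)/2)·sinh((a+c-b)/2)·sinh((b+c-a)/2) ≥ (sinh(a/2)+sinh(b/2)−sinh(c/2))·(sinh(a/2)+sinh(c/2)−sinh(b/2))·(sinh(b/2)+sinh(c/2)−sinh(a/2)). -/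
lemma key_id (a b c : ℝ) :
    Real.sinh ((a+c-b)/2) * Real.sinh ((a+b-c)/2) -
      (Real.sinh (a/2) + Real.sinh (c/2) - Real.sinh (b/2)) *
        (Real.sinh (a/2) + Real.sinh (b/2) - Real.sinh (c/2)) =
    (Real.cosh ((b-c)/2) - 1) * (Real.cosh ((b+c)/2) - Real.cosh ((b-c)/2)) := by
  rw [show (a+c-b)/2 = a/2 + c/2 - b/2 by ring, show (a+b-c)/2 = a/2 + b/2 - c/2 by ring,
    show (b-c)/2 = b/2 - c/2 by ring, show (b+c)/2 = b/2 + c/2 by ring]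
  simp only [Real.sinh_eq, Real.cosh_eq, Real.exp_add, Real.exp_sub, Real.exp_neg]
  have hA := Real.exp_ne_zero (a/2)
  have hB := Real.exp_ne_zero (b/2)
  have hC := Real.exp_ne_zero (c/2)
  field_simp
  ring

lemma key_le (a b c : ℝ) (hb : 0 < b) (hc : 0 < c) :
    (Real.sinh (a/2) + Real.sinh (c/2) - Real.sinh (b/2)) *
        (Real.sinh (a/2) + Real.sinh (b/2) - Real.sinh (c/2)) ≤
      Real.sinh ((a+c-b)/2) * Real.sinh ((a+b-c)/2) := by
  have h1 : (1:ℝ) ≤ Real.cosh ((b-c)/2) := Real.one_le_cosh _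
  have h2 : Real.cosh ((b-c)/2) ≤ Real.cosh ((b+c)/2) := by
    rw [Real.cosh_le_cosh, abs_of_pos (by positivity : (0:ℝ) < (b+c)/2)]
    exact abs_le.2 ⟨by linarith, by linarith⟩
  nlinarith [key_id a b c]

set_option maxHeartbeats 1000000 in
theorem stmt_3 (a b c : ℝ) (ha : 0 < a) (hb : 0 < b) (hc : 0 < c)
    (hab : a < b + c) (hbc : b < a + c) (hca : c < a + b) :
    Real.sinh ((a + b - c) / 2) * Real.sinh ((a + c - b) / 2) *
        Real.sinh ((b + c - a) / 2) ≥
      (Real.sinh (a / 2) + Real.sinh (b / 2) - Real.sinh (c / 2)) *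
        (Real.sinh (a / 2) + Real.sinh (c / 2) - Real.sinh (b / 2)) *
        (Real.sinh (b / 2) + Real.sinh (c / 2) - Real.sinh (a / 2)) := by
  set sx := Real.sinh ((b + c - a) / 2) with hsx
  set sy := Real.sinh ((a + c - b) / 2) with hsy
  set sz := Real.sinh ((a + b - c) / 2) with hsz
  set F1 := Real.sinh (b / 2) + Real.sinh (c / 2) - Real.sinh (a / 2) with hF1
  set F2 := Real.sinh (a / 2) + Real.sinh (c / 2) - Real.sinh (b / 2) with hF2
  set F3 := Real.sinh (a / 2) + Real.sinh (b / 2) - Real.sinh (c / 2) with hF3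
  clear_value sx sy sz F1 F2 F3
  have hx : 0 < sx := by rw [hsx]; exact Real.sinh_pos_iff.2 (by linarith)
  have hy : 0 < sy := by rw [hsy]; exact Real.sinh_pos_iff.2 (by linarith)
  have hz : 0 < sz := by rw [hsz]; exact Real.sinh_pos_iff.2 (by linarith)
  have hsa : 0 < Real.sinh (a / 2) := Real.sinh_pos_iff.2 (by linarith)
  have hsb : 0 < Real.sinh (b / 2) := Real.sinh_pos_iff.2 (by linarith)
  have hsc : 0 < Real.sinh (c / 2) := Real.sinh_pos_iff.2 (by linarith)
  have hF12 : F1 + F2 = 2 * Real.sinh (c / 2) := by rw [hF1, hF2]; ring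
  have hF13 : F1 + F3 = 2 * Real.sinh (b / 2) := by rw [hF1, hF3]; ring
  have hF23 : F2 + F3 = 2 * Real.sinh (a / 2) := by rw [hF2, hF3]; ring
  have hL : 0 < sz * sy * sx := by positivity
  rcases lt_or_ge F1 0 with hn1 | hp1
  · -- F1 < 0
    have h2 : 0 < F2 := by linarith
    have h3 : 0 < F3 := by linarith
    have : F3 * F2 * F1 < 0 := mul_neg_of_pos_of_neg (mul_pos h3 h2) hn1
    linarith
  rcases lt_or_ge F2 0 with hn2 | hp2
  · -- F2 < 0
    have h3 : 0 < F3 := by linarith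
    have h1' : 0 < F1 := by linarith
    have : F3 * F2 * F1 < 0 := by
      have := mul_neg_of_pos_of_neg h3 hn2
      nlinarith
    linarith
  rcases lt_or_ge F3 0 with hn3 | hp3
  · -- F3 < 0
    have : F3 * F2 * F1 < 0 := by
      have h2' : 0 < F2 := by linarith
      have h1' : 0 < F1 := by linarith
      have := mul_neg_of_neg_of_pos (mul_neg_of_neg_of_pos hn3 h2') h1'
      linarith
    linarith
  · -- all nonneg
    have h1 : F2 * F3 ≤ sy * sz := by
      rw [hF2, hF3, hsy, hsz]; exact key_le a b c hb hc
    have h2 : F1 * F3 ≤ sx * sz := by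
      have := key_le b a c ha hc
      rw [show (b+a-c)/2 = (a+b-c)/2 by ring] at this
      rw [hF1, hF3, hsx, hsz]
      nlinarith [this]
    have h3 : F1 * F2 ≤ sx * sy := by
      have := key_le c a b ha hb
      rw [show (c+b-a)/2 = (b+c-a)/2 by ring, show (c+a-b)/2 = (a+c-b)/2 by ring] at this
      rw [hF1, hF2, hsx, hsy]
      nlinarith [this]
    have p1 : 0 ≤ F2 * F3 := mul_nonneg hp2 hp3
    have p2 : 0 ≤ F1 * F3 := mul_nonneg hp1 hp3
    have p3 : 0 ≤ F1 * F2 := mul_nonneg hp1 hp2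
    have step1 : (F2 * F3) * (F1 * F3) ≤ (sy * sz) * (sx * sz) :=
      mul_le_mul h1 h2 p2 (by positivity)
    have step2 : ((F2 * F3) * (F1 * F3)) * (F1 * F2) ≤ ((sy * sz) * (sx * sz)) * (sx * sy) :=
      mul_le_mul step1 h3 p3 (by positivity)
    have hsq : (F3 * F2 * F1) ^ 2 ≤ (sz * sy * sx) ^ 2 := by
      have e1 : (F3 * F2 * F1) ^ 2 = ((F2 * F3) * (F1 * F3)) * (F1 * F2) := by ring
      have e2 : (sz * sy * sx) ^ 2 = ((sy * sz) * (sx * sz)) * (sx * sy) := by ring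
      rw [e1, e2]; exact step2
    have := le_of_pow_le_pow_left₀ (n := 2) (by norm_num) (le_of_lt hL) hsq
    linarith
end

section
/- Let a, b, c be positive real numbers satisfying the strict triangle inequalities a < b + c, b < a + c, c < a + b together with a + b + c < 2π. Then sin((a+b-c)/2)·sin((a+c-b)/2)·sin((b+c-a)/2) ≤ (sin(a/2)+sin(b/2)−sin(c/2))·(sin(a/2)+sin(c/2)−sin(b/2))·(sin(b/2)+sin(c/2)−sin(a/2)). -/
open Real

lemma aux_prod_eq (A B : ℝ) :
    Real.sin (A + B) * Real.sin (A - B) = Real.sin A ^ 2 - Real.sin B ^ 2 := by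
  rw [Real.sin_add, Real.sin_sub]
  nlinarith [Real.sin_sq_add_cos_sq A, Real.sin_sq_add_cos_sq B]

lemma aux_sq_sin (y z : ℝ) (hy : 0 < y) (hz : 0 < z) (hyz : y + z < Real.pi) :
    (Real.sin y - Real.sin z) ^ 2 ≤ Real.sin (y - z) ^ 2 := by
  have h1 : Real.sin y - Real.sin z = 2 * Real.sin ((y - z) / 2) * Real.cos ((y + z) / 2) :=
    Real.sin_sub_sin y z
  have h2 : Real.sin (y - z) = 2 * Real.sin ((y - z) / 2) * Real.cos ((y - z) / 2) := by
    rw [← Real.sin_two_mul]; ring_nf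
  have hcos1 : 0 < Real.cos ((y + z) / 2) := by
    apply Real.cos_pos_of_mem_Ioo
    constructor <;> [linarith [Real.pi_pos]; linarith]
  have hle : Real.cos ((y + z) / 2) ≤ Real.cos ((y - z) / 2) := by
    rw [← Real.cos_abs ((y - z) / 2)]
    apply Real.cos_le_cos_of_nonneg_of_le_pi (abs_nonneg _)
    · linarith
    · rw [abs_div, abs_of_pos (by norm_num : (0:ℝ) < 2)]
      rw [div_le_div_iff_of_pos_right (by norm_num : (0:ℝ) < 2)]
      rw [abs_le]; constructor <;> linarith
  rw [h1, h2]
  have hsq : Real.cos ((y + z) / 2) ^ 2 ≤ Real.cos ((y - z) / 2) ^ 2 :=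
    pow_le_pow_left₀ hcos1.le hle 2
  have hnn : 0 ≤ (2 * Real.sin ((y - z) / 2)) ^ 2 := sq_nonneg _
  calc (2 * Real.sin ((y - z) / 2) * Real.cos ((y + z) / 2)) ^ 2
      = (2 * Real.sin ((y - z) / 2)) ^ 2 * Real.cos ((y + z) / 2) ^ 2 := by ring
    _ ≤ (2 * Real.sin ((y - z) / 2)) ^ 2 * Real.cos ((y - z) / 2) ^ 2 :=
        mul_le_mul_of_nonneg_left hsq hnn
    _ = (2 * Real.sin ((y - z) / 2) * Real.cos ((y - z) / 2)) ^ 2 := by ring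

lemma aux_pos_factor (x y z : ℝ) (hx : 0 < x) (hy : 0 < y) (hz : 0 < z)
    (h : z < x + y) (hs : x + y + z < Real.pi) :
    0 < Real.sin x + Real.sin y - Real.sin z := by
  have h1 : Real.sin (x + y) - Real.sin z
      = 2 * Real.sin ((x + y - z) / 2) * Real.cos ((x + y + z) / 2) :=
    Real.sin_sub_sin (x + y) z
  have hs1 : 0 < Real.sin ((x + y - z) / 2) := by
    apply Real.sin_pos_of_pos_of_lt_pi <;> [linarith; linarith [Real.pi_pos]]
  have hc1 : 0 < Real.cos ((x + y + z) / 2) := by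
    apply Real.cos_pos_of_mem_Ioo
    constructor <;> [linarith [Real.pi_pos]; linarith]
  have h2 : Real.sin (x + y) ≤ Real.sin x + Real.sin y := by
    rw [Real.sin_add]
    have hsx : 0 ≤ Real.sin x := Real.sin_nonneg_of_nonneg_of_le_pi (le_of_lt hx) (by linarith)
    have hsy : 0 ≤ Real.sin y := Real.sin_nonneg_of_nonneg_of_le_pi (le_of_lt hy) (by linarith)
    nlinarith [Real.cos_le_one x, Real.cos_le_one y]
  nlinarith

set_option maxHeartbeats 1000000 in
theorem stmt_4 (a b c : ℝ) (ha : 0 < a) (hb : 0 < b) (hc : 0 < c)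
    (hab : a < b + c) (hbc : b < a + c) (hca : c < a + b)
    (hsum : a + b + c < 2 * Real.pi) :
    Real.sin ((a + b - c) / 2) * Real.sin ((a + c - b) / 2) *
        Real.sin ((b + c - a) / 2) ≤
      (Real.sin (a / 2) + Real.sin (b / 2) - Real.sin (c / 2)) *
        (Real.sin (a / 2) + Real.sin (c / 2) - Real.sin (b / 2)) *
        (Real.sin (b / 2) + Real.sin (c / 2) - Real.sin (a / 2)) := by
  set x := a / 2 with hxdef
  set y := b / 2 with hydef
  set z := c / 2 with hzdef
  have hx : 0 < x := by positivity
  have hy : 0 < y := by positivity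
  have hz : 0 < z := by positivity
  have hxyz : x + y + z < Real.pi := by
    simp only [hxdef, hydef, hzdef]; linarith
  have h1 : z < x + y := by simp only [hxdef, hydef, hzdef]; linarith
  have h2 : y < x + z := by simp only [hxdef, hydef, hzdef]; linarith
  have h3 : x < y + z := by simp only [hxdef, hydef, hzdef]; linarith
  have e1 : (a + b - c) / 2 = x + y - z := by simp only [hxdef, hydef, hzdef]; ring
  have e2 : (a + c - b) / 2 = x + z - y := by simp only [hxdef, hydef, hzdef]; ring
  have e3 : (b + c - a) / 2 = y + z - x := by simp only [hxdef, hydef, hzdef]; ring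
  rw [e1, e2, e3]
  -- positivity of LHS factors
  have p1 : 0 < Real.sin (x + y - z) :=
    Real.sin_pos_of_pos_of_lt_pi (by linarith) (by linarith)
  have p2 : 0 < Real.sin (x + z - y) :=
    Real.sin_pos_of_pos_of_lt_pi (by linarith) (by linarith)
  have p3 : 0 < Real.sin (y + z - x) :=
    Real.sin_pos_of_pos_of_lt_pi (by linarith) (by linarith)
  -- positivity of RHS factors
  have q1 : 0 < Real.sin x + Real.sin y - Real.sin z :=
    aux_pos_factor x y z hx hy hz h1 hxyz
  have q2 : 0 < Real.sin x + Real.sin z - Real.sin y :=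
    aux_pos_factor x z y hx hz hy h2 (by linarith)
  have q3 : 0 < Real.sin y + Real.sin z - Real.sin x :=
    aux_pos_factor y z x hy hz hx h3 (by linarith)
  -- pairwise inequalities
  have pair1 : Real.sin (x + y - z) * Real.sin (x + z - y)
      ≤ (Real.sin x + Real.sin y - Real.sin z) * (Real.sin x + Real.sin z - Real.sin y) := by
    have := aux_prod_eq x (y - z)
    have heq : x + (y - z) = x + y - z := by ring
    have heq2 : x - (y - z) = x + z - y := by ring
    rw [heq, heq2] at this
    have hs := aux_sq_sin y z hy hz (by linarith)
    nlinarith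
  have pair2 : Real.sin (x + y - z) * Real.sin (y + z - x)
      ≤ (Real.sin x + Real.sin y - Real.sin z) * (Real.sin y + Real.sin z - Real.sin x) := by
    have := aux_prod_eq y (x - z)
    have heq : y + (x - z) = x + y - z := by ring
    have heq2 : y - (x - z) = y + z - x := by ring
    rw [heq, heq2] at this
    have hs := aux_sq_sin x z hx hz (by linarith)
    nlinarith
  have pair3 : Real.sin (x + z - y) * Real.sin (y + z - x)
      ≤ (Real.sin x + Real.sin z - Real.sin y) * (Real.sin y + Real.sin z - Real.sin x) := by
    have := aux_prod_eq z (x - y)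
    have heq : z + (x - y) = x + z - y := by ring
    have heq2 : z - (x - y) = y + z - x := by ring
    rw [heq, heq2] at this
    have hs := aux_sq_sin x y hx hy (by linarith)
    nlinarith
  -- combine: squares of products
  set L := Real.sin (x + y - z) * Real.sin (x + z - y) * Real.sin (y + z - x) with hL
  set R := (Real.sin x + Real.sin y - Real.sin z) * (Real.sin x + Real.sin z - Real.sin y) *
    (Real.sin y + Real.sin z - Real.sin x) with hR
  have hLpos : 0 < L := by positivity
  have hRpos : 0 < R := by positivity
  have hsq : L ^ 2 ≤ R ^ 2 := by
    have hL2 : L ^ 2 = (Real.sin (x + y - z) * Real.sin (x + z - y)) *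
        (Real.sin (x + y - z) * Real.sin (y + z - x)) *
        (Real.sin (x + z - y) * Real.sin (y + z - x)) := by rw [hL]; ring
    have hR2 : R ^ 2 = ((Real.sin x + Real.sin y - Real.sin z) * (Real.sin x + Real.sin z - Real.sin y)) *
        ((Real.sin x + Real.sin y - Real.sin z) * (Real.sin y + Real.sin z - Real.sin x)) *
        ((Real.sin x + Real.sin z - Real.sin y) * (Real.sin y + Real.sin z - Real.sin x)) := by
      rw [hR]; ring
    rw [hL2, hR2]
    apply mul_le_mul (mul_le_mul pair1 pair2 (by positivity) (by positivity)) pair3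
      (by positivity) (by positivity)
  exact le_of_pow_le_pow_left₀ two_ne_zero hRpos.le hsq
end

section
/- Let a, b, c be real numbers with 0 ≤ c ≤ b ≤ a. Then sinh((b+c-a)/2) ≥ sinh(b/2) + sinh(c/2) − sinh(a/2). -/
theorem stmt_5 (a b c : ℝ) (hc : 0 ≤ c) (hcb : c ≤ b) (hba : b ≤ a) :
    Real.sinh ((b + c - a) / 2) ≥
      Real.sinh (b / 2) + Real.sinh (c / 2) - Real.sinh (a / 2) := by
  have key : ∀ p q : ℝ, Real.sinh (p + q) + Real.sinh (p - q) =
      2 * Real.sinh p * Real.cosh q := by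
    intro p q; rw [Real.sinh_add, Real.sinh_sub]; ring
  have e1 : (b + c - a) / 2 = (b + c) / 4 + (b + c - 2 * a) / 4 := by ring
  have e2 : a / 2 = (b + c) / 4 - (b + c - 2 * a) / 4 := by ring
  have e3 : b / 2 = (b + c) / 4 + (b - c) / 4 := by ring
  have e4 : c / 2 = (b + c) / 4 - (b - c) / 4 := by ring
  have h1 := key ((b + c) / 4) ((b + c - 2 * a) / 4)
  have h2 := key ((b + c) / 4) ((b - c) / 4)
  rw [e1, e2, e3, e4]
  have hs : 0 ≤ Real.sinh ((b + c) / 4) := Real.sinh_nonneg_iff.2 (by linarith)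
  have hcosh : Real.cosh ((b - c) / 4) ≤ Real.cosh ((b + c - 2 * a) / 4) := by
    refine Real.cosh_le_cosh.2 ?_
    rw [abs_of_nonneg (by linarith), abs_of_nonpos (by linarith)]; linarith
  nlinarith [mul_le_mul_of_nonneg_left hcosh hs]
end

section
/- For all real numbers a, b, c, the identity sinh((a+b-c)/2)·sinh((a+c-b)/2) − (sinh(a/2)+sinh(b/2)−sinh(c/2))·(sinh(a/2)+sinh(c/2)−sinh(b/2)) = 4·sinh(b/2)·sinh(c/2)·sinh²((b−c)/4) holds. In particular, if b ≥ 0 and c ≥ 0 then sinh((a+b-c)/2)·sinh((a+c-b)/2) ≥ (sinh(a/2)+sinh(b/2)−sinh(c/2))·(sinh(a/2)+sinh(c/2)−sinh(b/2)). -/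
theorem stmt_6 (a b c : ℝ) :
    Real.sinh ((a + b - c) / 2) * Real.sinh ((a + c - b) / 2) -
        (Real.sinh (a / 2) + Real.sinh (b / 2) - Real.sinh (c / 2)) *
          (Real.sinh (a / 2) + Real.sinh (c / 2) - Real.sinh (b / 2)) =
      4 * Real.sinh (b / 2) * Real.sinh (c / 2) * Real.sinh ((b - c) / 4) ^ 2 ∧
    (0 ≤ b → 0 ≤ c →
      Real.sinh ((a + b - c) / 2) * Real.sinh ((a + c - b) / 2) ≥
        (Real.sinh (a / 2) + Real.sinh (b / 2) - Real.sinh (c / 2)) *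
          (Real.sinh (a / 2) + Real.sinh (c / 2) - Real.sinh (b / 2))) := by
  have key : Real.sinh ((a + b - c) / 2) * Real.sinh ((a + c - b) / 2) -
        (Real.sinh (a / 2) + Real.sinh (b / 2) - Real.sinh (c / 2)) *
          (Real.sinh (a / 2) + Real.sinh (c / 2) - Real.sinh (b / 2)) =
      4 * Real.sinh (b / 2) * Real.sinh (c / 2) * Real.sinh ((b - c) / 4) ^ 2 := by
    have hsq : Real.sinh ((b - c) / 4) ^ 2 = (Real.cosh ((b - c) / 2) - 1) / 2 := by
      have := Real.cosh_two_mul ((b - c) / 4)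
      have h2 : 2 * ((b - c) / 4) = (b - c) / 2 := by ring
      rw [h2] at this
      nlinarith [Real.cosh_sq ((b - c) / 4)]
    rw [hsq]
    have hX := Real.exp_pos (a / 2)
    have hY := Real.exp_pos (b / 2)
    have hZ := Real.exp_pos (c / 2)
    have h1 : (a + b - c) / 2 = a / 2 + b / 2 - c / 2 := by ring
    have h2 : (a + c - b) / 2 = a / 2 + c / 2 - b / 2 := by ring
    have h3 : (b - c) / 2 = b / 2 - c / 2 := by ring
    rw [h1, h2, h3]
    simp only [Real.sinh_eq, Real.cosh_eq, Real.exp_sub, Real.exp_add, Real.exp_neg]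
    field_simp
    ring
  refine ⟨key, fun hb hc => ?_⟩
  have h1 : 0 ≤ Real.sinh (b / 2) := by rw [← Real.sinh_zero]; exact Real.sinh_le_sinh.2 (by linarith)
  have h2 : 0 ≤ Real.sinh (c / 2) := by rw [← Real.sinh_zero]; exact Real.sinh_le_sinh.2 (by linarith)
  have h3 : 0 ≤ 4 * Real.sinh (b / 2) * Real.sinh (c / 2) * Real.sinh ((b - c) / 4) ^ 2 := by positivity
  linarith
end

section
/- Let a, b, c be real numbers with 0 < c ≤ b ≤ a satisfying a < b + c and a + b + c < 2π. Then sin((b+c-a)/2) ≤ sin(b/2) + sin(c/2) − sin(a/2). -/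
private lemma sin_add_sin' (x y : ℝ) :
    Real.sin x + Real.sin y = 2 * Real.sin ((x + y) / 2) * Real.cos ((x - y) / 2) := by
  have s1 := Real.sin_add ((x + y) / 2) ((x - y) / 2)
  have s2 := Real.sin_sub ((x + y) / 2) ((x - y) / 2)
  rw [show (x + y) / 2 + (x - y) / 2 = x by ring] at s1
  rw [show (x + y) / 2 - (x - y) / 2 = y by ring] at s2
  rw [s1, s2]; ring

theorem stmt_7 (a b c : ℝ) (hc : 0 < c) (hcb : c ≤ b) (hba : b ≤ a)
    (hab : a < b + c) (hsum : a + b + c < 2 * Real.pi) :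
    Real.sin ((b + c - a) / 2) ≤
      Real.sin (b / 2) + Real.sin (c / 2) - Real.sin (a / 2) := by
  have pi_pos := Real.pi_pos
  have h1 : Real.sin ((b + c - a) / 2) + Real.sin (a / 2)
      = 2 * Real.sin ((b + c) / 4) * Real.cos ((2 * a - b - c) / 4) := by
    rw [sin_add_sin']
    rw [show ((b + c - a) / 2 + a / 2) / 2 = (b + c) / 4 by ring,
      show ((b + c - a) / 2 - a / 2) / 2 = -((2 * a - b - c) / 4) by ring,
      Real.cos_neg]
  have h2 : Real.sin (b / 2) + Real.sin (c / 2)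
      = 2 * Real.sin ((b + c) / 4) * Real.cos ((b - c) / 4) := by
    rw [sin_add_sin']
    ring_nf
  have hsin : 0 ≤ Real.sin ((b + c) / 4) := by
    apply Real.sin_nonneg_of_nonneg_of_le_pi <;> nlinarith
  have hcos : Real.cos ((2 * a - b - c) / 4) ≤ Real.cos ((b - c) / 4) := by
    apply Real.cos_le_cos_of_nonneg_of_le_pi <;> nlinarith
  nlinarith [mul_le_mul_of_nonneg_left hcos (mul_nonneg (by norm_num : (0:ℝ) ≤ 2) hsin)]
end

section
/- For all real numbers a, b, c, the identity (sin(a/2)+sin(b/2)−sin(c/2))·(sin(a/2)+sin(c/2)−sin(b/2)) − sin((a+b-c)/2)·sin((a+c-b)/2) = 4·sin(b/2)·sin(c/2)·sin²((b−c)/4) holds. In particular, if 0 ≤ b ≤ 2π and 0 ≤ c ≤ 2π then sin((a+b-c)/2)·sin((a+c-b)/2) ≤ (sin(a/2)+sin(b/2)−sin(c/2))·(sin(a/2)+sin(c/2)−sin(b/2)). -/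
theorem stmt_8 (a b c : ℝ) :
    (Real.sin (a / 2) + Real.sin (b / 2) - Real.sin (c / 2)) *
          (Real.sin (a / 2) + Real.sin (c / 2) - Real.sin (b / 2)) -
        Real.sin ((a + b - c) / 2) * Real.sin ((a + c - b) / 2) =
      4 * Real.sin (b / 2) * Real.sin (c / 2) * Real.sin ((b - c) / 4) ^ 2 ∧
    (0 ≤ b → b ≤ 2 * Real.pi → 0 ≤ c → c ≤ 2 * Real.pi →
      Real.sin ((a + b - c) / 2) * Real.sin ((a + c - b) / 2) ≤
        (Real.sin (a / 2) + Real.sin (b / 2) - Real.sin (c / 2)) *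
          (Real.sin (a / 2) + Real.sin (c / 2) - Real.sin (b / 2))) := by
  have key : (Real.sin (a / 2) + Real.sin (b / 2) - Real.sin (c / 2)) *
          (Real.sin (a / 2) + Real.sin (c / 2) - Real.sin (b / 2)) -
        Real.sin ((a + b - c) / 2) * Real.sin ((a + c - b) / 2) =
      4 * Real.sin (b / 2) * Real.sin (c / 2) * Real.sin ((b - c) / 4) ^ 2 := by
    have hw : Real.sin ((b - c) / 4) ^ 2 = 1/2 - Real.cos (b/2 - c/2) / 2 := by
      have h1 : Real.sin ((b - c) / 4) ^ 2 = 1 - Real.cos ((b - c)/4) ^ 2 := Real.sin_sq _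
      have h2 : Real.cos ((b - c)/4) ^ 2 = 1/2 + Real.cos (2 * ((b - c)/4)) / 2 :=
        Real.cos_sq _
      have h3 : 2 * ((b - c)/4) = b/2 - c/2 := by ring
      rw [h1, h2, h3]; ring
    have e1 : (a + b - c) / 2 = a/2 + (b/2 - c/2) := by ring
    have e2 : (a + c - b) / 2 = a/2 - (b/2 - c/2) := by ring
    rw [hw, e1, e2]; simp only [Real.sin_add, Real.sin_sub, Real.cos_sub]
    have pa := Real.sin_sq_add_cos_sq (a/2)
    have pb := Real.sin_sq_add_cos_sq (b/2)
    have pc := Real.sin_sq_add_cos_sq (c/2)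
    linear_combination
      (Real.sin (b/2) * Real.cos (c/2) - Real.cos (b/2) * Real.sin (c/2)) ^ 2 * pa +
      (Real.sin (c/2) ^ 2 - Real.sin (a/2) ^ 2 -
        Real.sin (a/2) ^ 2 * (Real.sin (c/2) ^ 2 + Real.cos (c/2) ^ 2 - 1)) * pb +
      (Real.sin (b/2) ^ 2 - Real.sin (a/2) ^ 2) * pc
  refine ⟨key, fun hb hb' hc hc' => ?_⟩
  have sb : 0 ≤ Real.sin (b / 2) := Real.sin_nonneg_of_nonneg_of_le_pi (by linarith) (by linarith)
  have sc : 0 ≤ Real.sin (c / 2) := Real.sin_nonneg_of_nonneg_of_le_pi (by linarith) (by linarith)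
  nlinarith [sq_nonneg (Real.sin ((b - c) / 4)), mul_nonneg sb sc]
end

section
/- Let a, b, c be positive real numbers satisfying the strict triangle inequalities a < b + c, b < a + c, c < a + b. Then 2abc/((a+b-c)(a+c-b)(b+c-a)) ≥ (a+b)(a+c)(b+c)/(4abc) ≥ 2, and equality holds throughout if and only if a = b = c. -/
theorem stmt_9 (a b c : ℝ) (ha : 0 < a) (hb : 0 < b) (hc : 0 < c)
    (hab : a < b + c) (hbc : b < a + c) (hca : c < a + b) :
    2 * a * b * c / ((a + b - c) * (a + c - b) * (b + c - a)) ≥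
      (a + b) * (a + c) * (b + c) / (4 * a * b * c) ∧
    (a + b) * (a + c) * (b + c) / (4 * a * b * c) ≥ 2 ∧
    ((2 * a * b * c / ((a + b - c) * (a + c - b) * (b + c - a)) =
        (a + b) * (a + c) * (b + c) / (4 * a * b * c) ∧
      (a + b) * (a + c) * (b + c) / (4 * a * b * c) = 2) ↔
      a = b ∧ b = c) := by
  have hx : 0 < a + b - c := by linarith
  have hy : 0 < a + c - b := by linarith
  have hz : 0 < b + c - a := by linarith
  have hxyz : 0 < (a + b - c) * (a + c - b) * (b + c - a) := by positivity
  have habc : 0 < 4 * a * b * c := by positivity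
  have h1 : 0 ≤ a * b * ((a + b + c) * ((a + b - c) * (a - b) ^ 2)) := by positivity
  have h2 : 0 ≤ a * c * ((a + b + c) * ((a + c - b) * (a - c) ^ 2)) := by positivity
  have h3 : 0 ≤ b * c * ((a + b + c) * ((b + c - a) * (b - c) ^ 2)) := by positivity
  have key : (a + b) * (a + c) * (b + c) * ((a + b - c) * (a + c - b) * (b + c - a))
      ≤ 2 * a * b * c * (4 * a * b * c) := by nlinarith [h1, h2, h3]
  have key2 : 8 * a * b * c ≤ (a + b) * (a + c) * (b + c) := by
    nlinarith [mul_nonneg ha.le (sq_nonneg (b - c)), mul_nonneg hb.le (sq_nonneg (a - c)),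
      mul_nonneg hc.le (sq_nonneg (a - b))]
  refine ⟨?_, ?_, ?_⟩
  · rw [ge_iff_le, div_le_div_iff₀ habc hxyz]; linarith
  · rw [ge_iff_le, le_div_iff₀ habc]; linarith
  · constructor
    · rintro ⟨-, h2eq⟩
      rw [div_eq_iff habc.ne'] at h2eq
      have hqa : (a - b) ^ 2 ≤ 0 := by
        nlinarith [mul_nonneg ha.le (sq_nonneg (b - c)), mul_nonneg hb.le (sq_nonneg (a - c)),
          mul_nonneg hc.le (sq_nonneg (a - b))]
      have hqb : (b - c) ^ 2 ≤ 0 := by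
        nlinarith [mul_nonneg ha.le (sq_nonneg (b - c)), mul_nonneg hb.le (sq_nonneg (a - c)),
          mul_nonneg hc.le (sq_nonneg (a - b))]
      constructor
      · have := le_antisymm hqa (sq_nonneg _)
        have h0 := pow_eq_zero_iff (n := 2) two_ne_zero |>.mp this
        linarith [sub_eq_zero.mp h0]
      · have := le_antisymm hqb (sq_nonneg _)
        have h0 := pow_eq_zero_iff (n := 2) two_ne_zero |>.mp this
        linarith [sub_eq_zero.mp h0]
    · rintro ⟨rfl, rfl⟩
      constructor
      · rw [div_eq_div_iff hxyz.ne' habc.ne']; ring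
      · rw [div_eq_iff habc.ne']; ring
end

section
/- Let a, b, c be positive real numbers satisfying the strict triangle inequalities a < b + c, b < a + c, c < a + b together with a + b + c < 2π. Then (sin(a/2)·sin(b/2)·sin(c/2))² ≥ sin((a+b-c)/2)·sin((a+c-b)/2)·sin((b+c-a)/2)·sin((a+b)/4)·sin((a+c)/4)·sin((b+c)/4). -/
open Real

private lemma sinprod (m d : ℝ) :
    Real.sin (m + d) * Real.sin (m - d) = Real.sin m ^ 2 - Real.sin d ^ 2 := by
  rw [Real.sin_add, Real.sin_sub]
  have h1 := Real.sin_sq_add_cos_sq m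
  have h2 := Real.sin_sq_add_cos_sq d
  nlinarith [h1, h2]

private lemma key (a b c : ℝ) (ha : 0 < a) (hb : 0 < b) (hc : 0 < c)
    (h1 : a < b + c) (h2 : b < a + c) (h3 : c < a + b)
    (h4 : a + b + c < 2 * Real.pi) :
    Real.sin ((a + b - c) / 2) * Real.sin ((a + c - b) / 2) * Real.sin ((b + c) / 4) ^ 2 ≤
      Real.sin (a / 2) ^ 2 * (Real.sin (b / 2) * Real.sin (c / 2)) := by
  have hpi := Real.pi_pos
  have e1 : Real.sin ((a + b - c) / 2) * Real.sin ((a + c - b) / 2)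
      = Real.sin (a / 2) ^ 2 - Real.sin ((b - c) / 2) ^ 2 := by
    have := sinprod (a / 2) ((b - c) / 2)
    rw [show a / 2 + (b - c) / 2 = (a + b - c) / 2 by ring,
        show a / 2 - (b - c) / 2 = (a + c - b) / 2 by ring] at this
    exact this
  have e2 : Real.sin (b / 2) * Real.sin (c / 2)
      = Real.sin ((b + c) / 4) ^ 2 - Real.sin ((b - c) / 4) ^ 2 := by
    have := sinprod ((b + c) / 4) ((b - c) / 4)
    rw [show (b + c) / 4 + (b - c) / 4 = b / 2 by ring,
        show (b + c) / 4 - (b - c) / 4 = c / 2 by ring] at this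
    exact this
  have e3 : Real.sin (a / 2) = 2 * Real.sin (a / 4) * Real.cos (a / 4) := by
    have := Real.sin_two_mul (a / 4)
    rw [show 2 * (a / 4) = a / 2 by ring] at this
    linarith [this]
  have e4 : Real.sin ((b - c) / 2) = 2 * Real.sin ((b - c) / 4) * Real.cos ((b - c) / 4) := by
    have := Real.sin_two_mul ((b - c) / 4)
    rw [show 2 * ((b - c) / 4) = (b - c) / 2 by ring] at this
    linarith [this]
  -- monotonicity facts
  have h5 : Real.sin (a / 4) ≤ Real.sin ((b + c) / 4) := by
    apply Real.sin_le_sin_of_le_of_le_pi_div_two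
    · linarith
    · linarith
    · linarith
  have h6 : Real.cos (a / 4) ≤ Real.cos ((b - c) / 4) := by
    have habs : |(b - c) / 4| ≤ a / 4 := by
      rw [abs_div, abs_of_pos (by norm_num : (0:ℝ) < 4)]
      have : |b - c| ≤ a := abs_le.mpr ⟨by linarith, by linarith⟩
      linarith
    calc Real.cos (a / 4) ≤ Real.cos |(b - c) / 4| := by
            exact Real.cos_le_cos_of_nonneg_of_le_pi (abs_nonneg _) (by linarith) habs
      _ = Real.cos ((b - c) / 4) := Real.cos_abs _
  have hs : 0 ≤ Real.sin (a / 4) := Real.sin_nonneg_of_nonneg_of_le_pi (by linarith) (by linarith)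
  have hcn : 0 ≤ Real.cos (a / 4) := Real.cos_nonneg_of_mem_Icc ⟨by linarith, by linarith⟩
  have h7 : Real.sin (a / 4) * Real.cos (a / 4)
      ≤ Real.sin ((b + c) / 4) * Real.cos ((b - c) / 4) :=
    mul_le_mul h5 h6 hcn (le_trans hs h5)
  have h11 : (Real.sin (a / 4) * Real.cos (a / 4)) ^ 2
      ≤ (Real.sin ((b + c) / 4) * Real.cos ((b - c) / 4)) ^ 2 := by
    nlinarith [h7, mul_nonneg hs hcn]
  have h9 : Real.sin (a / 2) ^ 2 * Real.sin ((b - c) / 4) ^ 2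
      ≤ Real.sin ((b - c) / 2) ^ 2 * Real.sin ((b + c) / 4) ^ 2 := by
    rw [e3, e4]
    nlinarith [h11, sq_nonneg (Real.sin ((b - c) / 4))]
  calc Real.sin ((a + b - c) / 2) * Real.sin ((a + c - b) / 2) * Real.sin ((b + c) / 4) ^ 2
      = (Real.sin (a / 2) ^ 2 - Real.sin ((b - c) / 2) ^ 2) * Real.sin ((b + c) / 4) ^ 2 := by
        rw [e1]
    _ ≤ Real.sin (a / 2) ^ 2 * (Real.sin ((b + c) / 4) ^ 2 - Real.sin ((b - c) / 4) ^ 2) := by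
        nlinarith [h9]
    _ = Real.sin (a / 2) ^ 2 * (Real.sin (b / 2) * Real.sin (c / 2)) := by rw [← e2]

theorem stmt_12 (a b c : ℝ) (ha : 0 < a) (hb : 0 < b) (hc : 0 < c)
    (hab : a < b + c) (hbc : b < a + c) (hca : c < a + b)
    (hsum : a + b + c < 2 * Real.pi) :
    (Real.sin (a / 2) * Real.sin (b / 2) * Real.sin (c / 2)) ^ 2 ≥
      Real.sin ((a + b - c) / 2) * Real.sin ((a + c - b) / 2) *
        Real.sin ((b + c - a) / 2) *
        Real.sin ((a + b) / 4) * Real.sin ((a + c) / 4) * Real.sin ((b + c) / 4) := by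
  have hpi := Real.pi_pos
  have K1 := key a b c ha hb hc hab hbc hca hsum
  have K2 := key b a c hb ha hc hbc hab (by linarith) (by linarith)
  have K3 := key c a b hc ha hb hca (by linarith) (by linarith) (by linarith)
  rw [show b + a - c = a + b - c by ring] at K2
  rw [show c + a - b = a + c - b by ring, show c + b - a = b + c - a by ring] at K3
  -- positivity of all the sines involved
  have p1 : 0 < Real.sin ((a + b - c) / 2) :=
    Real.sin_pos_of_pos_of_lt_pi (by linarith) (by linarith)
  have p2 : 0 < Real.sin ((a + c - b) / 2) :=
    Real.sin_pos_of_pos_of_lt_pi (by linarith) (by linarith)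
  have p3 : 0 < Real.sin ((b + c - a) / 2) :=
    Real.sin_pos_of_pos_of_lt_pi (by linarith) (by linarith)
  have p4 : 0 < Real.sin ((a + b) / 4) :=
    Real.sin_pos_of_pos_of_lt_pi (by linarith) (by linarith)
  have p5 : 0 < Real.sin ((a + c) / 4) :=
    Real.sin_pos_of_pos_of_lt_pi (by linarith) (by linarith)
  have p6 : 0 < Real.sin ((b + c) / 4) :=
    Real.sin_pos_of_pos_of_lt_pi (by linarith) (by linarith)
  have q1 : 0 < Real.sin (a / 2) :=
    Real.sin_pos_of_pos_of_lt_pi (by linarith) (by linarith)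
  have q2 : 0 < Real.sin (b / 2) :=
    Real.sin_pos_of_pos_of_lt_pi (by linarith) (by linarith)
  have q3 : 0 < Real.sin (c / 2) :=
    Real.sin_pos_of_pos_of_lt_pi (by linarith) (by linarith)
  set R := Real.sin ((a + b - c) / 2) * Real.sin ((a + c - b) / 2) *
      Real.sin ((b + c - a) / 2) *
      Real.sin ((a + b) / 4) * Real.sin ((a + c) / 4) * Real.sin ((b + c) / 4) with hR
  set P := Real.sin (a / 2) * Real.sin (b / 2) * Real.sin (c / 2) with hP
  have hR0 : 0 ≤ R := by
    rw [hR]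
    exact le_of_lt (mul_pos (mul_pos (mul_pos (mul_pos (mul_pos p1 p2) p3) p4) p5) p6)
  have hP0 : 0 ≤ P ^ 2 := sq_nonneg _
  have M : R ^ 2 ≤ (P ^ 2) ^ 2 := by
    have n1 : 0 ≤ Real.sin ((a + b - c) / 2) * Real.sin ((b + c - a) / 2) *
        Real.sin ((a + c) / 4) ^ 2 := le_of_lt (mul_pos (mul_pos p1 p3) (pow_pos p5 2))
    have n2 : 0 ≤ Real.sin (a / 2) ^ 2 * (Real.sin (b / 2) * Real.sin (c / 2)) :=
      le_of_lt (mul_pos (pow_pos q1 2) (mul_pos q2 q3))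
    have n3 : 0 ≤ Real.sin ((a + c - b) / 2) * Real.sin ((b + c - a) / 2) *
        Real.sin ((a + b) / 4) ^ 2 := le_of_lt (mul_pos (mul_pos p2 p3) (pow_pos p4 2))
    have n4 : 0 ≤ Real.sin (a / 2) ^ 2 * (Real.sin (b / 2) * Real.sin (c / 2)) *
        (Real.sin (b / 2) ^ 2 * (Real.sin (a / 2) * Real.sin (c / 2))) :=
      le_of_lt (mul_pos (mul_pos (pow_pos q1 2) (mul_pos q2 q3))
        (mul_pos (pow_pos q2 2) (mul_pos q1 q3)))
    have H := mul_le_mul (mul_le_mul K1 K2 n1 n2) K3 n3 n4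
    calc R ^ 2 = Real.sin ((a + b - c) / 2) * Real.sin ((a + c - b) / 2) *
            Real.sin ((b + c) / 4) ^ 2 *
            (Real.sin ((a + b - c) / 2) * Real.sin ((b + c - a) / 2) *
              Real.sin ((a + c) / 4) ^ 2) *
            (Real.sin ((a + c - b) / 2) * Real.sin ((b + c - a) / 2) *
              Real.sin ((a + b) / 4) ^ 2) := by rw [hR]; ring
      _ ≤ Real.sin (a / 2) ^ 2 * (Real.sin (b / 2) * Real.sin (c / 2)) *
            (Real.sin (b / 2) ^ 2 * (Real.sin (a / 2) * Real.sin (c / 2))) *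
            (Real.sin (c / 2) ^ 2 * (Real.sin (a / 2) * Real.sin (b / 2))) := H
      _ = (P ^ 2) ^ 2 := by rw [hP]; ring
  exact (pow_le_pow_iff_left₀ hR0 hP0 two_ne_zero).mp M
end

section
/- Let a, b, c be positive real numbers satisfying the strict triangle inequalities a < b + c, b < a + c, c < a + b. Then 8a²b²c² ≥ (a+b-c)(a+c-b)(b+c-a)(a+b)(a+c)(b+c). -/
theorem key_stmt14 (x y z : ℝ) (hx : 0 < x) (hy : 0 < y) (hz : 0 < z) :
    ((y+z)*(x+z)*(x+y))^2 ≥ x*y*z*((x+y+2*z)*(x+2*y+z)*(2*x+y+z)) := by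
  nlinarith [sq_nonneg (x-y), sq_nonneg (y-z), sq_nonneg (x-z), mul_pos hx hy, mul_pos hy hz, mul_pos hx hz, sq_nonneg (x*y-y*z), sq_nonneg (x*y-x*z), sq_nonneg (y*z-x*z), mul_pos (mul_pos hx hy) hz, sq_nonneg (x+y-2*z), sq_nonneg (x+z-2*y), sq_nonneg (y+z-2*x), sq_nonneg (x*y+y*z+x*z)]

theorem stmt_14 (a b c : ℝ) (ha : 0 < a) (hb : 0 < b) (hc : 0 < c)
    (hab : a < b + c) (hbc : b < a + c) (hca : c < a + b) :
    8 * a ^ 2 * b ^ 2 * c ^ 2 ≥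
      (a + b - c) * (a + c - b) * (b + c - a) * (a + b) * (a + c) * (b + c) := by
  have h := key_stmt14 (b+c-a) (a+c-b) (a+b-c) (by linarith) (by linarith) (by linarith)
  nlinarith [h]
end

section
/- Let a, b, c be positive real numbers satisfying the strict triangle inequalities a < b + c, b < a + c, c < a + b together with a + b + c < 2π, and write sₐ = sin(a/2), s_b = sin(b/2), s_c = sin(c/2) and B = sin((a+b-c)/2)·sin((a+c-b)/2)·sin((b+c-a)/2). Then 2·sₐ·s_b·s_c/B ≥ (sₐ·s_b·s_c + sₐ³ + s_b³ + s_c³)/(2·sₐ·s_b·s_c) ≥ sₐ/s_b + s_b/s_c + s_c/sₐ − 1 ≥ (2/3)(sₐ/s_b + s_b/s_c + s_c/sₐ) ≥ 2. -/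
private lemma my_schur (x y z : ℝ) (hx : 0 ≤ x) (hy : 0 ≤ y) (hz : 0 ≤ z) :
    0 ≤ x*(x-y)*(x-z) + y*(y-x)*(y-z) + z*(z-x)*(z-y) := by
  rcases le_total x y with h1 | h1 <;> rcases le_total y z with h2 | h2 <;>
    rcases le_total x z with h3 | h3 <;>
  nlinarith [mul_nonneg hx (sq_nonneg (x-y)), mul_nonneg hy (sq_nonneg (y-z)),
    mul_nonneg hz (sq_nonneg (x-z)), mul_nonneg hx (sq_nonneg (x-z)),
    mul_nonneg hy (sq_nonneg (x-y)), mul_nonneg hz (sq_nonneg (y-z)),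
    mul_nonneg (mul_nonneg hx hy) hz]

private lemma plane_euler (m n p : ℝ) (hm : 0 < m) (hn : 0 < n) (hp : 0 < p) :
    8*m*n*p*((m+n)*(m+p)*(n+p) + (m+n)^3 + (m+p)^3 + (n+p)^3) ≤
    4*((m+n)*(m+p)*(n+p))^2 := by
  have hs := my_schur (m*n) (m*p) (n*p) (by positivity) (by positivity) (by positivity)
  nlinarith [hs, mul_nonneg (sq_nonneg (m^2)) (sq_nonneg (n-p)),
    mul_nonneg (sq_nonneg (n^2)) (sq_nonneg (m-p)),
    mul_nonneg (sq_nonneg (p^2)) (sq_nonneg (m-n))]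

private lemma plane_step2 (m n p : ℝ) (hm : 0 < m) (hn : 0 < n) (hp : 0 < p) :
    2*((m+n)^2*(n+p) + (m+n)*(m+p)^2 + (m+p)*(n+p)^2) ≤
    (m+n)^3 + (m+p)^3 + (n+p)^3 + 3*((m+n)*(m+p)*(n+p)) := by
  nlinarith [sq_nonneg (m-n), sq_nonneg (n-p), sq_nonneg (m-p), mul_pos hm hn,
    mul_pos hn hp, mul_pos hm hp, sq_nonneg (m-n+p), sq_nonneg (m+n-p),
    mul_nonneg hm.le (sq_nonneg (n-p)), mul_nonneg hn.le (sq_nonneg (m-p)),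
    mul_nonneg hp.le (sq_nonneg (m-n))]

private lemma plane_amgm (m n p : ℝ) (hm : 0 < m) (hn : 0 < n) (hp : 0 < p) :
    3*((m+n)*(m+p)*(n+p)) ≤ (m+n)^2*(n+p) + (m+n)*(m+p)^2 + (m+p)*(n+p)^2 := by
  nlinarith [sq_nonneg (m-n), sq_nonneg (n-p), sq_nonneg (m-p),
    mul_pos hm hn, mul_pos hn hp, mul_pos hm hp,
    mul_nonneg hm.le (sq_nonneg (n-p)), mul_nonneg hn.le (sq_nonneg (m-p)),
    mul_nonneg hp.le (sq_nonneg (m-n)), mul_nonneg hm.le (sq_nonneg (m-n)),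
    mul_nonneg hn.le (sq_nonneg (n-p)), mul_nonneg hp.le (sq_nonneg (m-p))]

set_option maxHeartbeats 2000000 in
private lemma aux_main (u v w Sx Sy Sz : ℝ) (hu : 0 < u) (hv : 0 < v) (hw : 0 < w)
    (hSx : 0 < Sx) (hSy : 0 < Sy) (hSz : 0 < Sz)
    (g1 : Sx*Sy ≤ u^2 - (v-w)^2) (g2 : Sx*Sz ≤ v^2 - (u-w)^2)
    (g3 : Sy*Sz ≤ w^2 - (u-v)^2) :
    2 * u * v * w / (Sx * Sy * Sz) ≥ (u * v * w + u ^ 3 + v ^ 3 + w ^ 3) / (2 * u * v * w) ∧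
    (u * v * w + u ^ 3 + v ^ 3 + w ^ 3) / (2 * u * v * w) ≥ u / v + v / w + w / u - 1 ∧
    u / v + v / w + w / u - 1 ≥ 2 / 3 * (u / v + v / w + w / u) ∧
    2 / 3 * (u / v + v / w + w / u) ≥ 2 := by
  have hq1 : (v - w)^2 < u^2 := by linarith [g1, mul_pos hSx hSy]
  have hq2 : (u - w)^2 < v^2 := by linarith [g2, mul_pos hSx hSz]
  have ht1 : 0 < u + v - w := by nlinarith [hq1, hu, hv, hw]
  have ht2 : 0 < u + w - v := by nlinarith [hq1, hu, hv, hw]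
  have ht3 : 0 < v + w - u := by nlinarith [hq2, hu, hv, hw]
  have hm : 0 < (u + v - w)/2 := by linarith
  have hn : 0 < (u + w - v)/2 := by linarith
  have hp : 0 < (v + w - u)/2 := by linarith
  have hB : 0 < Sx * Sy * Sz := by positivity
  have hBT : Sx * Sy * Sz ≤ (u + v - w) * (u + w - v) * (v + w - u) := by
    have h12 : (Sx*Sy) * ((Sx*Sz) * (Sy*Sz)) ≤
        (u^2 - (v - w)^2) * ((v^2 - (u - w)^2) * (w^2 - (u - v)^2)) := by
      apply mul_le_mul g1
      · apply mul_le_mul g2 g3 (by positivity) (le_trans (by positivity) g2)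
      · positivity
      · exact le_trans (by positivity) g1
    have hsq : (Sx * Sy * Sz)^2 ≤ ((u + v - w) * (u + w - v) * (v + w - u))^2 := by
      calc (Sx * Sy * Sz)^2 = (Sx*Sy) * ((Sx*Sz) * (Sy*Sz)) := by ring
        _ ≤ (u^2 - (v - w)^2) * ((v^2 - (u - w)^2) * (w^2 - (u - v)^2)) := h12
        _ = ((u + v - w) * (u + w - v) * (v + w - u))^2 := by ring
    exact le_of_pow_le_pow_left₀ (by norm_num) (by positivity) hsq
  have key1 : (u + v - w) * (u + w - v) * (v + w - u) *
      (u*v*w + u^3 + v^3 + w^3) ≤ 4 * (u*v*w)^2 := by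
    have h := plane_euler ((u+v-w)/2) ((u+w-v)/2) ((v+w-u)/2) hm hn hp
    nlinarith [h]
  have key2 : 2*(u^2*w + u*v^2 + v*w^2) ≤ u^3 + v^3 + w^3 + 3*(u*v*w) := by
    have h := plane_step2 ((u+v-w)/2) ((u+w-v)/2) ((v+w-u)/2) hm hn hp
    nlinarith [h]
  have key3 : 3*(u*v*w) ≤ u^2*w + u*v^2 + v*w^2 := by
    have h := plane_amgm ((u+v-w)/2) ((u+w-v)/2) ((v+w-u)/2) hm hn hp
    nlinarith [h]
  have hsum3 : 3 ≤ u/v + v/w + w/u := by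
    have hfrac : u/v + v/w + w/u = (u^2*w + u*v^2 + v*w^2)/(u*v*w) := by
      field_simp
    rw [hfrac, le_div_iff₀ (by positivity)]
    linarith [key3]
  refine ⟨?_, ?_, ?_, ?_⟩
  · rw [ge_iff_le, div_le_div_iff₀ (by positivity) hB]
    have h5 : (u*v*w + u^3 + v^3 + w^3) * (Sx * Sy * Sz) ≤
        (u*v*w + u^3 + v^3 + w^3) * ((u + v - w) * (u + w - v) * (v + w - u)) :=
      mul_le_mul_of_nonneg_left hBT (by positivity)
    nlinarith [h5, key1]
  · rw [ge_iff_le, ← sub_nonneg]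
    have e : (u * v * w + u ^ 3 + v ^ 3 + w ^ 3) / (2 * u * v * w) - (u / v + v / w + w / u - 1)
        = (u^3 + v^3 + w^3 + 3*(u*v*w) - 2*(u^2*w + u*v^2 + v*w^2)) / (2 * (u*v*w)) := by
      field_simp
      ring
    rw [e]
    apply div_nonneg (by linarith [key2]) (by positivity)
  · linarith [hsum3]
  · linarith [hsum3]

private lemma sin_mul_sin (s d : ℝ) :
    Real.sin (s+d) * Real.sin (s-d) = Real.sin s^2 - Real.sin d^2 := by
  rw [Real.sin_add, Real.sin_sub]
  have hs := Real.sin_sq_add_cos_sq s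
  have hd := Real.sin_sq_add_cos_sq d
  linear_combination Real.sin s ^ 2 * hd - Real.sin d ^ 2 * hs

private lemma sin_diff_sq (X Y : ℝ) (hX : 0 < X) (hY : 0 < Y)
    (hXY : X + Y < 2*Real.pi) :
    (Real.sin (X/2) - Real.sin (Y/2))^2 ≤ Real.sin ((X-Y)/2)^2 := by
  have h1 : Real.sin (X/2) - Real.sin (Y/2)
      = 2 * Real.sin ((X-Y)/4) * Real.cos ((X+Y)/4) := by
    have h := Real.sin_sub_sin (X/2) (Y/2)
    rw [show (X/2 - Y/2)/2 = (X-Y)/4 by ring, show (X/2 + Y/2)/2 = (X+Y)/4 by ring] at h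
    exact h
  have h2 : Real.sin ((X-Y)/2) = 2 * Real.sin ((X-Y)/4) * Real.cos ((X-Y)/4) := by
    rw [show (X-Y)/2 = 2*((X-Y)/4) by ring, Real.sin_two_mul]
  have hpi := Real.pi_pos
  have hc0 : 0 ≤ Real.cos ((X+Y)/4) := by
    apply Real.cos_nonneg_of_mem_Icc
    constructor <;> nlinarith
  have hcc : Real.cos ((X+Y)/4) ≤ Real.cos ((X-Y)/4) := by
    rw [← Real.cos_abs ((X-Y)/4)]
    apply Real.cos_le_cos_of_nonneg_of_le_pi (abs_nonneg _) (by nlinarith)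
    rw [abs_le]
    constructor <;> linarith
  rw [h1, h2]
  nlinarith [mul_nonneg (mul_nonneg (sq_nonneg (Real.sin ((X-Y)/4))) (sub_nonneg.2 hcc))
    (by linarith : (0:ℝ) ≤ Real.cos ((X-Y)/4) + Real.cos ((X+Y)/4))]

theorem stmt_15 (a b c : ℝ) (ha : 0 < a) (hb : 0 < b) (hc : 0 < c)
    (hab : a < b + c) (hbc : b < a + c) (hca : c < a + b)
    (hsum : a + b + c < 2 * Real.pi) :
    let sa := Real.sin (a / 2)
    let sb := Real.sin (b / 2)
    let sc := Real.sin (c / 2)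
    let B := Real.sin ((a + b - c) / 2) * Real.sin ((a + c - b) / 2) *
      Real.sin ((b + c - a) / 2)
    2 * sa * sb * sc / B ≥ (sa * sb * sc + sa ^ 3 + sb ^ 3 + sc ^ 3) / (2 * sa * sb * sc) ∧
    (sa * sb * sc + sa ^ 3 + sb ^ 3 + sc ^ 3) / (2 * sa * sb * sc) ≥
      sa / sb + sb / sc + sc / sa - 1 ∧
    sa / sb + sb / sc + sc / sa - 1 ≥ 2 / 3 * (sa / sb + sb / sc + sc / sa) ∧
    2 / 3 * (sa / sb + sb / sc + sc / sa) ≥ 2 := by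
  intro sa sb sc B
  have hpi := Real.pi_pos
  have hu : 0 < Real.sin (a / 2) := Real.sin_pos_of_pos_of_lt_pi (by linarith) (by linarith)
  have hv : 0 < Real.sin (b / 2) := Real.sin_pos_of_pos_of_lt_pi (by linarith) (by linarith)
  have hw : 0 < Real.sin (c / 2) := Real.sin_pos_of_pos_of_lt_pi (by linarith) (by linarith)
  have hSx : 0 < Real.sin ((a + b - c) / 2) :=
    Real.sin_pos_of_pos_of_lt_pi (by linarith) (by linarith)
  have hSy : 0 < Real.sin ((a + c - b) / 2) :=
    Real.sin_pos_of_pos_of_lt_pi (by linarith) (by linarith)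
  have hSz : 0 < Real.sin ((b + c - a) / 2) :=
    Real.sin_pos_of_pos_of_lt_pi (by linarith) (by linarith)
  have g1 : Real.sin ((a + b - c) / 2) * Real.sin ((a + c - b) / 2) ≤
      Real.sin (a / 2)^2 - (Real.sin (b / 2) - Real.sin (c / 2))^2 := by
    have e := sin_mul_sin (a/2) ((b-c)/2)
    rw [show a/2 + (b-c)/2 = (a+b-c)/2 by ring, show a/2 - (b-c)/2 = (a+c-b)/2 by ring] at e
    have h := sin_diff_sq b c hb hc (by linarith)
    linarith [e, h]
  have g2 : Real.sin ((a + b - c) / 2) * Real.sin ((b + c - a) / 2) ≤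
      Real.sin (b / 2)^2 - (Real.sin (a / 2) - Real.sin (c / 2))^2 := by
    have e := sin_mul_sin (b/2) ((a-c)/2)
    rw [show b/2 + (a-c)/2 = (a+b-c)/2 by ring, show b/2 - (a-c)/2 = (b+c-a)/2 by ring] at e
    have h := sin_diff_sq a c ha hc (by linarith)
    linarith [e, h]
  have g3 : Real.sin ((a + c - b) / 2) * Real.sin ((b + c - a) / 2) ≤
      Real.sin (c / 2)^2 - (Real.sin (a / 2) - Real.sin (b / 2))^2 := by
    have e := sin_mul_sin (c/2) ((a-b)/2)
    rw [show c/2 + (a-b)/2 = (a+c-b)/2 by ring, show c/2 - (a-b)/2 = (b+c-a)/2 by ring] at e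
    have h := sin_diff_sq a b ha hb (by linarith)
    linarith [e, h]
  exact aux_main (Real.sin (a / 2)) (Real.sin (b / 2)) (Real.sin (c / 2))
    (Real.sin ((a + b - c) / 2)) (Real.sin ((a + c - b) / 2)) (Real.sin ((b + c - a) / 2))
    hu hv hw hSx hSy hSz g1 g2 g3
end

section
/- Let a, b, c be positive real numbers satisfying the strict triangle inequalities a < b + c, b < a + c, c < a + b. Then 2abc/((a+b-c)(a+c-b)(b+c-a)) ≥ (abc + a³ + b³ + c³)/(2abc) ≥ (1/2)(a/b + b/a + a/c + c/a + b/c + c/b) − 1 ≥ (1/3)(a/b + b/a + a/c + c/a + b/c + c/b) ≥ (a+b)(a+c)(b+c)/(4abc) ≥ 2. -/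
lemma aux_sorted (p q r : ℝ) (hr : 0 < r) (hrq : r ≤ q) (hqp : q ≤ p) :
    2*p*q*r*((p+q)*(q+r)*(p+r) + (p+q)^3+(q+r)^3+(p+r)^3) ≤
    ((p+q)*(q+r)*(p+r))^2 := by
  have hs : (0:ℝ) ≤ q - r := by linarith
  have ht : (0:ℝ) ≤ p - q := by linarith
  have key : ((p+q)*(q+r)*(p+r))^2 - 2*p*q*r*((p+q)*(q+r)*(p+r) + (p+q)^3+(q+r)^3+(p+r)^3)
      = 1*r^0*(q-r)^2*(p-q)^4 + 6*r^0*(q-r)^3*(p-q)^3 + 13*r^0*(q-r)^4*(p-q)^2 + 12*r^0*(q-r)^5*(p-q)^1 + 4*r^0*(q-r)^6*(p-q)^0 + 8*r^1*(q-r)^2*(p-q)^3 + 32*r^1*(q-r)^3*(p-q)^2 + 40*r^1*(q-r)^4*(p-q)^1 + 16*r^1*(q-r)^5*(p-q)^0 + 24*r^2*(q-r)^2*(p-q)^2 + 48*r^2*(q-r)^3*(p-q)^1 + 24*r^2*(q-r)^4*(p-q)^0 + 8*r^3*(q-r)^1*(p-q)^2 + 24*r^3*(q-r)^2*(p-q)^1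 + 16*r^3*(q-r)^3*(p-q)^0 + 4*r^4*(q-r)^0*(p-q)^2 + 4*r^4*(q-r)^1*(p-q)^1 + 4*r^4*(q-r)^2*(p-q)^0 := by
    ring
  nlinarith [key, mul_nonneg (mul_nonneg (pow_nonneg hr.le 0) (pow_nonneg hs 2)) (pow_nonneg ht 4), mul_nonneg (mul_nonneg (pow_nonneg hr.le 0) (pow_nonneg hs 3)) (pow_nonneg ht 3), mul_nonneg (mul_nonneg (pow_nonneg hr.le 0) (pow_nonneg hs 4)) (pow_nonneg ht 2), mul_nonneg (mul_nonneg (pow_nonneg hr.le 0) (pow_nonneg hs 5)) (pow_nonneg ht 1), mul_nonneg (mul_nonneg (pow_nonneg hr.le 0) (pow_nonneg hs 6)) (pow_nonneg ht 0), mul_nonneg (mul_nonneg (pow_nonneg hr.le 1) (pow_nonneg hs 2)) (pow_nonneg ht 3), mul_nonneg (mul_nonneg (pow_nonneg hr.le 1) (pow_nonneg hs 3)) (pow_nonneg ht 2), mul_nonneg (mul_nonneg (pow_nonneg hr.le 1) (pow_nonneg hs 4)) (pow_nonneg ht 1), mul_nonneg (mul_nonneg (pow_nonneg hr.le 1) (pow_nonneg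 hs 5)) (pow_nonneg ht 0), mul_nonneg (mul_nonneg (pow_nonneg hr.le 2) (pow_nonneg hs 2)) (pow_nonneg ht 2), mul_nonneg (mul_nonneg (pow_nonneg hr.le 2) (pow_nonneg hs 3)) (pow_nonneg ht 1), mul_nonneg (mul_nonneg (pow_nonneg hr.le 2) (pow_nonneg hs 4)) (pow_nonneg ht 0), mul_nonneg (mul_nonneg (pow_nonneg hr.le 3) (pow_nonneg hs 1)) (pow_nonneg ht 2), mul_nonneg (mul_nonneg (pow_nonneg hr.le 3) (pow_nonneg hs 2)) (pow_nonneg ht 1), mul_nonneg (mul_nonneg (pow_nonneg hr.le 3) (pow_nonneg hs 3)) (pow_nonneg ht 0), mul_nonneg (mul_nonneg (pow_nonneg hr.le 4) (pow_nonneg hs 0)) (pow_nonneg ht 2), mul_nonneg (mul_nonneg (pow_nonneg hr.le 4) (pow_nonneg hs 1)) (pow_nonneg ht 1), mul_nonneg (mul_nonneg (pow_nonneg hr.le 4) (pow_nonneg hs 2)) (pow_nonneg ht 0)]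

lemma aux_all (p q r : ℝ) (hp : 0 < p) (hq : 0 < q) (hr : 0 < r) :
    2*p*q*r*((p+q)*(q+r)*(p+r) + (p+q)^3+(q+r)^3+(p+r)^3) ≤
    ((p+q)*(q+r)*(p+r))^2 := by
  rcases le_total p q with h1 | h1 <;> rcases le_total q r with h2 | h2 <;>
    rcases le_total p r with h3 | h3
  · linarith [aux_sorted r q p hp h1 h2]
  · linarith [aux_sorted r q p hp h1 h2]
  · linarith [aux_sorted q r p hp h3 h2]
  · linarith [aux_sorted q p r hr h3 h1]
  · linarith [aux_sorted r p q hq h1 h3]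
  · linarith [aux_sorted p r q hq h2 h3]
  · linarith [aux_sorted p q r hr h2 h1]
  · linarith [aux_sorted p q r hr h2 h1]

theorem stmt_16 (a b c : ℝ) (ha : 0 < a) (hb : 0 < b) (hc : 0 < c)
    (hab : a < b + c) (hbc : b < a + c) (hca : c < a + b) :
    2 * a * b * c / ((a + b - c) * (a + c - b) * (b + c - a)) ≥
      (a * b * c + a ^ 3 + b ^ 3 + c ^ 3) / (2 * a * b * c) ∧
    (a * b * c + a ^ 3 + b ^ 3 + c ^ 3) / (2 * a * b * c) ≥
      1 / 2 * (a / b + b / a + a / c + c / a + b / c + c / b) - 1 ∧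
    1 / 2 * (a / b + b / a + a / c + c / a + b / c + c / b) - 1 ≥
      1 / 3 * (a / b + b / a + a / c + c / a + b / c + c / b) ∧
    1 / 3 * (a / b + b / a + a / c + c / a + b / c + c / b) ≥
      (a + b) * (a + c) * (b + c) / (4 * a * b * c) ∧
    (a + b) * (a + c) * (b + c) / (4 * a * b * c) ≥ 2 := by
  have hp : 0 < b + c - a := by linarith
  have hq : 0 < a + c - b := by linarith
  have hr : 0 < a + b - c := by linarith
  refine ⟨?_, ?_, ?_, ?_, ?_⟩
  · rw [ge_iff_le, div_le_div_iff₀ (by positivity) (by positivity)]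
    nlinarith [aux_all (b+c-a) (a+c-b) (a+b-c) hp hq hr]
  · rw [ge_iff_le, ← sub_nonneg]
    have h : (a * b * c + a ^ 3 + b ^ 3 + c ^ 3) / (2 * a * b * c) -
        (1 / 2 * (a / b + b / a + a / c + c / a + b / c + c / b) - 1) =
        (a^3 + b^3 + c^3 + 3*a*b*c - (a^2*b + a*b^2 + b^2*c + b*c^2 + a^2*c + a*c^2)) / (2*a*b*c) := by
      field_simp; ring
    rw [h]
    apply div_nonneg _ (by positivity)
    nlinarith [mul_nonneg (mul_nonneg hp.le hq.le) hr.le, sq_nonneg (a-b), sq_nonneg (b-c), sq_nonneg (a-c)]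
  · rw [ge_iff_le, ← sub_nonneg]
    have h : 1 / 2 * (a / b + b / a + a / c + c / a + b / c + c / b) - 1 -
        1 / 3 * (a / b + b / a + a / c + c / a + b / c + c / b) =
        (a^2*b + a*b^2 + b^2*c + b*c^2 + a^2*c + a*c^2 - 6*a*b*c) / (6*a*b*c) := by
      field_simp; ring
    rw [h]
    apply div_nonneg _ (by positivity)
    nlinarith [mul_nonneg hc.le (sq_nonneg (a-b)), mul_nonneg ha.le (sq_nonneg (b-c)), mul_nonneg hb.le (sq_nonneg (a-c))]
  · rw [ge_iff_le, ← sub_nonneg]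
    have h : 1 / 3 * (a / b + b / a + a / c + c / a + b / c + c / b) -
        (a + b) * (a + c) * (b + c) / (4 * a * b * c) =
        (a^2*b + a*b^2 + b^2*c + b*c^2 + a^2*c + a*c^2 - 6*a*b*c) / (12*a*b*c) := by
      field_simp; ring
    rw [h]
    apply div_nonneg _ (by positivity)
    nlinarith [mul_nonneg hc.le (sq_nonneg (a-b)), mul_nonneg ha.le (sq_nonneg (b-c)), mul_nonneg hb.le (sq_nonneg (a-c))]
  · rw [ge_iff_le, le_div_iff₀ (by positivity)]
    nlinarith [mul_nonneg hc.le (sq_nonneg (a-b)), mul_nonneg ha.le (sq_nonneg (b-c)), mul_nonneg hb.le (sq_nonneg (a-c))]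
end
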